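/- For any monoid M and any M-pigmented words p, p' of the same arity, p ∼ p' if and only if first_1(p) = first_1(p') and first_1^R(p) = first_1^R(p'). -/

import Mathlib

/-- An `M`-pigmented word of arity `n`: a list of letters `(i, α)` whose value is
`i ∈ Fin n` (representing the value `i + 1 ∈ {1, …, n}`) and whose pigment is `α ∈ M`. -/
abbrev PW (M : Type*) (n : ℕ) : Type _ := List (Fin n × M)

/-- The value `i` occurs in the word `p`. -/
def hasVal {M : Type*} {n : ℕ} (p : PW M n) (i : Fin n) : Prop := ∃ l ∈ p, l.1 = i

/-- `⤳₁`: delete a letter whose value occurs both before and after it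
(a position which is neither a left `1`-witness nor a right `1`-witness). -/
def Step1 {M : Type*} {n : ℕ} (u v : PW M n) : Prop :=
  ∃ (p p' : PW M n) (i : Fin n) (α : M),
    u = p ++ (i, α) :: p' ∧ v = p ++ p' ∧ hasVal p i ∧ hasVal p' i

/-- `⤳₂`: swap two adjacent letters `i₁^{α₁} i₂^{α₂}` with distinct values, where
`i₁` occurs after, `i₂` occurs before, and `i₂` does not occur after. -/
def Step2 {M : Type*} {n : ℕ} (u v : PW M n) : Prop :=
  ∃ (p p' : PW M n) (i₁ i₂ : Fin n) (α₁ α₂ : M),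
    u = p ++ (i₁, α₁) :: (i₂, α₂) :: p' ∧ v = p ++ (i₂, α₂) :: (i₁, α₁) :: p' ∧
    i₁ ≠ i₂ ∧ hasVal p' i₁ ∧ hasVal p i₂ ∧ ¬ hasVal p' i₂

/-- `⤳₃`: contract two equal adjacent letters to one. -/
def Step3 {M : Type*} {n : ℕ} (u v : PW M n) : Prop :=
  ∃ (p p' : PW M n) (i : Fin n) (α : M),
    u = p ++ (i, α) :: (i, α) :: p' ∧ v = p ++ (i, α) :: p'

/-- The union `⤳₁ ∪ ⤳₂ ∪ ⤳₃`; the relation `∼` is its reflexive, symmetric and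
transitive closure `Relation.EqvGen MagnStep`. -/
def MagnStep {M : Type*} {n : ℕ} (u v : PW M n) : Prop := Step1 u v ∨ Step2 u v ∨ Step3 u v

/-- `firstKAux k pre p` keeps those letters of `p` whose position is a left
`k`-witness, given that the prefix `pre` has already been read. -/
def firstKAux {M : Type*} {n : ℕ} (k : ℕ) : PW M n → PW M n → PW M n
  | _, [] => []
  | pre, l :: t =>
    if pre.countP (fun x => decide (x.1 = l.1)) < k
    then l :: firstKAux k (pre ++ [l]) t
    else firstKAux k (pre ++ [l]) t

/-- `firstK k p` keeps, for each value, the first `k` occurrences of that value in `p`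
(the letters at left `k`-witness positions). -/
def firstK {M : Type*} {n : ℕ} (k : ℕ) (p : PW M n) : PW M n := firstKAux k [] p

/-- `firstKR k p` keeps, for each value, the last `k` occurrences of that value in `p`:
it is the reverse of `firstK k` applied to the reverse of `p`. -/
def firstKR {M : Type*} {n : ℕ} (k : ℕ) (p : PW M n) : PW M n := (firstK k p.reverse).reverse
section Lemmas
variable {M : Type*} {n : ℕ}

/-- The list of values of a pigmented word. -/
def vals (p : PW M n) : List (Fin n) := p.map Prod.fst

lemma hasVal_iff (p : PW M n) (i : Fin n) : hasVal p i ↔ i ∈ vals p := by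
  simp only [hasVal, vals, List.mem_map]

lemma countP_eq_zero_iff (p : PW M n) (i : Fin n) :
    p.countP (fun x => decide (x.1 = i)) = 0 ↔ i ∉ vals p := by
  rw [List.countP_eq_zero]
  constructor
  · intro h hm
    rw [vals, List.mem_map] at hm
    obtain ⟨x, hx, hxi⟩ := hm
    have := h x hx
    simp only [decide_eq_true_eq] at this
    exact this hxi
  · intro h x hx
    simp only [decide_eq_true_eq]
    intro he
    exact h (by rw [vals, List.mem_map]; exact ⟨x, hx, he⟩)

lemma mem_map_filter_ne (A : PW M n) (i j : Fin n) :
    i ∈ (A.filter (fun x => decide (x.1 ≠ j))).map Prod.fst ↔ (i ∈ A.map Prod.fst ∧ i ≠ j) := by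
  simp only [List.mem_map, List.mem_filter, decide_eq_true_eq]
  constructor
  · rintro ⟨x, ⟨hx, hne⟩, rfl⟩
    exact ⟨⟨x, hx, rfl⟩, hne⟩
  · rintro ⟨⟨x, hx, rfl⟩, hne⟩
    exact ⟨x, ⟨hx, hne⟩, rfl⟩

lemma firstKAux_filter (t : PW M n) : ∀ pre : PW M n,
    firstKAux 1 pre t = (firstKAux 1 [] t).filter (fun x => decide (x.1 ∉ vals pre)) := by
  induction t with
  | nil => intro pre; simp [firstKAux]
  | cons l t ih =>
    intro pre
    have base : firstKAux 1 [] (l :: t) = l :: firstKAux 1 [l] t := by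
      simp [firstKAux]
    rw [base]
    rw [firstKAux]
    have hc : (pre.countP (fun x => decide (x.1 = l.1)) < 1) ↔ l.1 ∉ vals pre := by
      rw [Nat.lt_one_iff, countP_eq_zero_iff]
    have ht : firstKAux 1 (pre ++ [l]) t
        = (firstKAux 1 [] t).filter (fun x => decide (x.1 ∉ vals (pre ++ [l]))) := ih _
    have htl : firstKAux 1 [l] t
        = (firstKAux 1 [] t).filter (fun x => decide (x.1 ∉ vals [l])) := ih _
    have key : ∀ x : Fin n × M,
        (decide (x.1 ∉ vals (pre ++ [l])) : Bool)
          = (decide (x.1 ∉ vals pre) && decide (x.1 ∉ vals [l])) := by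
      intro x
      simp only [vals, List.map_append, List.mem_append, List.map_cons, List.map_nil,
        List.mem_singleton, not_or, Bool.decide_and]
      by_cases h1 : x.1 ∈ List.map Prod.fst pre <;> by_cases h2 : x.1 = l.1 <;> simp [h1, h2]
    by_cases h : l.1 ∈ vals pre
    · rw [if_neg (by simpa [hc] using h)]
      rw [List.filter_cons_of_neg (by simpa using h)]
      rw [ht, htl, List.filter_filter]
      apply List.filter_congr
      intro x _
      exact key x
    · rw [if_pos (hc.mpr h)]
      rw [List.filter_cons_of_pos (by simpa using h)]
      rw [ht, htl, List.filter_filter]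
      congr 1
      apply List.filter_congr
      intro x _
      exact key x

lemma firstK1_cons (a : Fin n × M) (q : PW M n) :
    firstK 1 (a :: q) = a :: (firstK 1 q).filter (fun x => decide (x.1 ≠ a.1)) := by
  show firstKAux 1 [] (a :: q) = _
  rw [firstKAux]
  rw [if_pos (by simp)]
  rw [firstKAux_filter]
  simp only [firstK]
  congr 1
  apply List.filter_congr
  intro x _
  simp [vals]

lemma firstKAux_append (X : PW M n) : ∀ (pre Y : PW M n),
    firstKAux 1 pre (X ++ Y) = firstKAux 1 pre X ++ firstKAux 1 (pre ++ X) Y := by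
  induction X with
  | nil => intro pre Y; simp [firstKAux]
  | cons l X ih =>
    intro pre Y
    simp only [List.cons_append, firstKAux]
    by_cases h : pre.countP (fun x => decide (x.1 = l.1)) < 1
    · rw [if_pos h, if_pos h]
      rw [ih]
      simp
    · rw [if_neg h, if_neg h]
      rw [ih]
      simp

lemma firstK1_append (X Y : PW M n) :
    firstK 1 (X ++ Y) = firstK 1 X ++ (firstK 1 Y).filter (fun x => decide (x.1 ∉ vals X)) := by
  show firstKAux 1 [] (X ++ Y) = _
  rw [firstKAux_append]
  congr 1
  rw [firstKAux_filter]
  rfl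

lemma mem_vals_firstK1 (p : PW M n) (i : Fin n) : i ∈ vals (firstK 1 p) ↔ i ∈ vals p := by
  induction p with
  | nil => simp [firstK, firstKAux, vals]
  | cons a q ih =>
    rw [firstK1_cons]
    simp only [vals] at *
    simp only [List.map_cons, List.mem_cons, mem_map_filter_ne, ih]
    by_cases h : i = a.1 <;> simp [h]

lemma nodup_vals_firstK1 (p : PW M n) : (vals (firstK 1 p)).Nodup := by
  induction p with
  | nil => simp [firstK, firstKAux, vals]
  | cons a q ih =>
    rw [firstK1_cons]
    simp only [vals, List.map_cons, List.nodup_cons]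
    constructor
    · intro hm
      rw [mem_map_filter_ne] at hm
      exact hm.2 rfl
    · exact ih.sublist ((List.filter_sublist).map _)

end Lemmas
section Lemmas2
variable {M : Type*} {n : ℕ}

lemma filter_filter_ne (A : PW M n) (i j : Fin n) :
    (A.filter (fun x => decide (x.1 ≠ j))).filter (fun x => decide (x.1 ≠ i))
      = (A.filter (fun x => decide (x.1 ≠ i))).filter (fun x => decide (x.1 ≠ j)) := by
  rw [List.filter_filter, List.filter_filter]
  apply List.filter_congr
  intro x _
  rw [Bool.and_comm]

lemma filter_ne_idem (A : PW M n) (i : Fin n) :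
    (A.filter (fun x => decide (x.1 ≠ i))).filter (fun x => decide (x.1 ≠ i))
      = A.filter (fun x => decide (x.1 ≠ i)) := by
  rw [List.filter_filter]
  apply List.filter_congr
  intro x _
  rw [Bool.and_self]

/-- Filtering out value `i` from `first₁` ignores an inserted letter of value `i`. -/
lemma firstK1_filt (i : Fin n) (α : M) (Y : PW M n) : ∀ X : PW M n,
    (firstK 1 (X ++ (i, α) :: Y)).filter (fun x => decide (x.1 ≠ i))
      = (firstK 1 (X ++ Y)).filter (fun x => decide (x.1 ≠ i)) := by
  intro X
  induction X with
  | nil =>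
    simp only [List.nil_append, firstK1_cons]
    rw [List.filter_cons_of_neg (by simp)]
    exact filter_ne_idem _ _
  | cons b X ih =>
    simp only [List.cons_append, firstK1_cons]
    by_cases hb : (decide (b.1 ≠ i) : Bool) = true
    · simp only [List.filter_cons, hb, if_true]
      congr 1
      rw [filter_filter_ne, filter_filter_ne _ i b.1, ih]
    · have hb' : (decide (b.1 ≠ i) : Bool) = false := by simpa using hb
      simp only [List.filter_cons, hb', Bool.false_eq_true, if_false]
      rw [filter_filter_ne, filter_filter_ne _ i b.1, ih]

/-- Deleting a letter whose value occurs earlier does not change `first₁`. -/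
lemma firstK1_del (i : Fin n) (α : M) (Y : PW M n) : ∀ X : PW M n,
    i ∈ vals X → firstK 1 (X ++ (i, α) :: Y) = firstK 1 (X ++ Y) := by
  intro X
  induction X with
  | nil => intro h; simp [vals] at h
  | cons b X ih =>
    intro h
    simp only [List.cons_append, firstK1_cons]
    by_cases h2 : i ∈ vals X
    · rw [ih h2]
    · have h1 : i = b.1 := by
        simp only [vals, List.map_cons, List.mem_cons] at h
        rcases h with h | h
        · exact h
        · exact absurd h (by simpa [vals] using h2)
      congr 1
      rw [← h1]
      exact firstK1_filt i α Y X

/-- Contracting two equal adjacent letters does not change `first₁`. -/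
lemma firstK1_contract (i : Fin n) (α : M) (X Y : PW M n) :
    firstK 1 (X ++ (i, α) :: (i, α) :: Y) = firstK 1 (X ++ (i, α) :: Y) := by
  have h : X ++ (i, α) :: (i, α) :: Y = (X ++ [(i, α)]) ++ (i, α) :: Y := by simp
  rw [h, firstK1_del i α Y (X ++ [(i, α)]) (by simp [vals])]
  simp

/-- Swapping adjacent letters when the second one's value occurs earlier. -/
lemma firstK1_swap (i₁ i₂ : Fin n) (α₁ α₂ : M) (X Y : PW M n) (h : i₂ ∈ vals X) :
    firstK 1 (X ++ (i₁, α₁) :: (i₂, α₂) :: Y) = firstK 1 (X ++ (i₂, α₂) :: (i₁, α₁) :: Y) := by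
  have e1 : X ++ (i₁, α₁) :: (i₂, α₂) :: Y = (X ++ [(i₁, α₁)]) ++ (i₂, α₂) :: Y := by simp
  rw [e1, firstK1_del i₂ α₂ Y (X ++ [(i₁, α₁)]) (by simp [vals] at h ⊢; tauto)]
  rw [firstK1_del i₂ α₂ ((i₁, α₁) :: Y) X h]
  simp

lemma step_firstK1 {u v : PW M n} (h : MagnStep u v) : firstK 1 u = firstK 1 v := by
  rcases h with ⟨X, Y, i, α, hu, hv, h1, _⟩ | ⟨X, Y, i₁, i₂, α₁, α₂, hu, hv, _, _, h2, _⟩ |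
    ⟨X, Y, i, α, hu, hv⟩
  · rw [hu, hv]; exact firstK1_del i α Y X ((hasVal_iff _ _).1 h1)
  · rw [hu, hv]; exact firstK1_swap i₁ i₂ α₁ α₂ X Y ((hasVal_iff _ _).1 h2)
  · rw [hu, hv]; exact firstK1_contract i α X Y

lemma step_firstKR1 {u v : PW M n} (h : MagnStep u v) : firstKR 1 u = firstKR 1 v := by
  unfold firstKR
  congr 1
  rcases h with ⟨X, Y, i, α, hu, hv, _, h1⟩ | ⟨X, Y, i₁, i₂, α₁, α₂, hu, hv, _, h1, _, _⟩ |
    ⟨X, Y, i, α, hu, hv⟩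
  · rw [hu, hv]
    have e1 : (X ++ (i, α) :: Y).reverse = Y.reverse ++ (i, α) :: X.reverse := by simp
    have e2 : (X ++ Y).reverse = Y.reverse ++ X.reverse := by simp
    rw [e1, e2]
    exact firstK1_del i α X.reverse Y.reverse
      (by rw [hasVal_iff] at h1; simpa [vals] using h1)
  · rw [hu, hv]
    have e1 : (X ++ (i₁, α₁) :: (i₂, α₂) :: Y).reverse
        = Y.reverse ++ (i₂, α₂) :: (i₁, α₁) :: X.reverse := by simp
    have e2 : (X ++ (i₂, α₂) :: (i₁, α₁) :: Y).reverse
        = Y.reverse ++ (i₁, α₁) :: (i₂, α₂) :: X.reverse := by simp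
    rw [e1, e2]
    exact firstK1_swap i₂ i₁ α₂ α₁ Y.reverse X.reverse
      (by rw [hasVal_iff] at h1; simpa [vals] using h1)
  · rw [hu, hv]
    have e1 : (X ++ (i, α) :: (i, α) :: Y).reverse
        = Y.reverse ++ (i, α) :: (i, α) :: X.reverse := by simp
    have e2 : (X ++ (i, α) :: Y).reverse = Y.reverse ++ (i, α) :: X.reverse := by simp
    rw [e1, e2]
    exact firstK1_contract i α Y.reverse X.reverse

end Lemmas2
section Lemmas3
variable {M : Type*} {n : ℕ}

lemma hasVal_cons {p : PW M n} {i : Fin n} (a : Fin n × M) (h : hasVal p i) :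
    hasVal (a :: p) i := by
  obtain ⟨l, hl, hi⟩ := h
  exact ⟨l, List.mem_cons_of_mem _ hl, hi⟩

lemma magnStep_cons (a : Fin n × M) {u v : PW M n} (h : MagnStep u v) :
    MagnStep (a :: u) (a :: v) := by
  rcases h with ⟨X, Y, i, α, hu, hv, h1, h2⟩ | ⟨X, Y, i₁, i₂, α₁, α₂, hu, hv, hn, h1, h2, h3⟩ |
    ⟨X, Y, i, α, hu, hv⟩
  · exact Or.inl ⟨a :: X, Y, i, α, by rw [hu]; rfl, by rw [hv]; rfl, hasVal_cons a h1, h2⟩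
  · exact Or.inr (Or.inl ⟨a :: X, Y, i₁, i₂, α₁, α₂, by rw [hu]; rfl, by rw [hv]; rfl, hn,
      h1, hasVal_cons a h2, h3⟩)
  · exact Or.inr (Or.inr ⟨a :: X, Y, i, α, by rw [hu]; rfl, by rw [hv]; rfl⟩)

lemma eqv_cons (a : Fin n × M) {u v : PW M n} (h : Relation.EqvGen MagnStep u v) :
    Relation.EqvGen MagnStep (a :: u) (a :: v) := by
  induction h with
  | rel x y hxy => exact Relation.EqvGen.rel _ _ (magnStep_cons a hxy)
  | refl x => exact Relation.EqvGen.refl _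
  | symm x y _ ih => exact Relation.EqvGen.symm _ _ ih
  | trans x y z _ _ ih1 ih2 => exact Relation.EqvGen.trans _ _ _ ih1 ih2

lemma bubble (a : Fin n × M) : ∀ (g c Y : PW M n),
    a.1 ∈ vals c → (∀ j ∈ vals g, j ∈ vals Y) → a.1 ∉ vals g → a.1 ∉ vals Y →
    Relation.EqvGen MagnStep (c ++ a :: (g ++ Y)) (c ++ (g ++ a :: Y)) := by
  intro g
  induction g with
  | nil => intro c Y _ _ _ _; exact Relation.EqvGen.refl _
  | cons b g ih =>
    intro c Y hc hgY hg hY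
    have hbY : b.1 ∈ vals Y := hgY b.1 (by simp [vals])
    have hba : b.1 ≠ a.1 := fun he => hY (he ▸ hbY)
    have hstep : Step2 (c ++ (b.1, b.2) :: (a.1, a.2) :: (g ++ Y))
        (c ++ (a.1, a.2) :: (b.1, b.2) :: (g ++ Y)) := by
      refine ⟨c, g ++ Y, b.1, a.1, b.2, a.2, rfl, rfl, hba, ?_, ?_, ?_⟩
      · rw [hasVal_iff]
        simp only [vals, List.map_append, List.mem_append]
        exact Or.inr (by simpa [vals] using hbY)
      · rw [hasVal_iff]; exact hc
      · rw [hasVal_iff]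
        simp only [vals, List.map_append, List.mem_append]
        rintro (h | h)
        · exact hg (by simp [vals, h])
        · exact hY (by simpa [vals] using h)
    have e1 : c ++ (b.1, b.2) :: (a.1, a.2) :: (g ++ Y) = (c ++ [b]) ++ a :: (g ++ Y) := by
      simp
    have e2 : c ++ (a.1, a.2) :: (b.1, b.2) :: (g ++ Y) = c ++ a :: (b :: g ++ Y) := by
      simp
    rw [e1, e2] at hstep
    have h1 : Relation.EqvGen MagnStep (c ++ a :: (b :: g ++ Y)) ((c ++ [b]) ++ a :: (g ++ Y)) :=
      Relation.EqvGen.symm _ _ (Relation.EqvGen.rel _ _ (Or.inr (Or.inl hstep)))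
    have h2 : Relation.EqvGen MagnStep ((c ++ [b]) ++ a :: (g ++ Y))
        ((c ++ [b]) ++ (g ++ a :: Y)) := by
      refine ih (c ++ [b]) Y ?_ ?_ ?_ hY
      · simp only [vals, List.map_append, List.mem_append]; exact Or.inl hc
      · intro j hj; exact hgY j (by simp [vals] at hj ⊢; tauto)
      · intro hmem; exact hg (by simp [vals] at hmem ⊢; tauto)
    have e3 : (c ++ [b]) ++ (g ++ a :: Y) = c ++ (b :: g ++ a :: Y) := by simp
    rw [e3] at h2
    exact Relation.EqvGen.trans _ _ _ h1 h2

lemma firstK1_singleton (a : Fin n × M) : firstK 1 [a] = [a] := by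
  simp [firstK, firstKAux]

lemma firstK1_cons_not_mem {a : Fin n × M} {q : PW M n} (h : a.1 ∉ vals q) :
    firstK 1 (a :: q) = a :: firstK 1 q := by
  rw [firstK1_cons]
  congr 1
  apply List.filter_eq_self.2
  intro x hx
  simp only [decide_eq_true_eq]
  intro he
  have : x.1 ∈ vals (firstK 1 q) := by simp [vals]; exact ⟨x.2, by simpa using hx⟩
  rw [mem_vals_firstK1] at this
  exact h (he ▸ this)

lemma mem_vals_firstKR1 (q : PW M n) (i : Fin n) : i ∈ vals (firstKR 1 q) ↔ i ∈ vals q := by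
  unfold firstKR
  have : vals (firstK 1 q.reverse).reverse = (vals (firstK 1 q.reverse)).reverse := by
    simp [vals]
  rw [this, List.mem_reverse, mem_vals_firstK1]
  simp [vals]

lemma firstKR1_cons_not_mem {a : Fin n × M} {q : PW M n} (h : a.1 ∉ vals q) :
    firstKR 1 (a :: q) = a :: firstKR 1 q := by
  unfold firstKR
  rw [List.reverse_cons, firstK1_append, firstK1_singleton]
  have hc : (decide (a.1 ∉ vals q.reverse) : Bool) = true := by
    simp only [decide_eq_true_eq]
    intro hm; exact h (by simpa [vals] using hm)
  simp only [List.filter_cons, List.filter_nil, hc, if_true]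
  simp

lemma firstKR1_cons_mem {a : Fin n × M} {q : PW M n} (h : a.1 ∈ vals q) :
    firstKR 1 (a :: q) = firstKR 1 q := by
  unfold firstKR
  rw [List.reverse_cons, firstK1_append, firstK1_singleton]
  have hc : ¬ ((decide (a.1 ∉ vals q.reverse) : Bool) = true) := by
    simp only [decide_eq_true_eq, not_not]
    simpa [vals] using h
  have hc' : (decide (a.1 ∉ vals q.reverse) : Bool) = false := by
    simpa using hc
  simp only [List.filter_cons, List.filter_nil, hc', Bool.false_eq_true, if_false]
  simp

lemma firstK1_cons_mem {a : Fin n × M} {q : PW M n} (h : a.1 ∈ vals q) :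
    ∃ (g h' : PW M n) (β : M), firstK 1 q = g ++ (a.1, β) :: h' ∧
      a.1 ∉ vals g ∧ a.1 ∉ vals h' ∧ firstK 1 (a :: q) = a :: (g ++ h') := by
  have hm : a.1 ∈ vals (firstK 1 q) := (mem_vals_firstK1 q a.1).2 h
  rw [vals, List.mem_map] at hm
  obtain ⟨x, hx, hxa⟩ := hm
  obtain ⟨g, h', hq⟩ := List.append_of_mem hx
  have hnd := nodup_vals_firstK1 (M := M) (n := n) q
  rw [hq] at hnd
  have hvals : vals (g ++ x :: h') = vals g ++ x.1 :: vals h' := by simp [vals]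
  rw [hvals] at hnd
  rw [List.nodup_append] at hnd
  obtain ⟨hnd1, hnd2, hdisj⟩ := hnd
  have hxg : x.1 ∉ vals g := fun hmem => hdisj _ hmem _ (by simp) rfl
  have hxh : x.1 ∉ vals h' := (List.nodup_cons.1 hnd2).1
  refine ⟨g, h', x.2, ?_, hxa ▸ hxg, hxa ▸ hxh, ?_⟩
  · rw [hq, hxa.symm]
  · rw [firstK1_cons, hq]
    congr 1
    rw [List.filter_append]
    rw [List.filter_eq_self.2 (fun y hy => by
      simp only [decide_eq_true_eq]
      intro he
      exact hxg (hxa ▸ he ▸ (by simp [vals]; exact ⟨y.2, by simpa using hy⟩)))]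
    rw [List.filter_cons_of_neg (by simp [hxa])]
    rw [List.filter_eq_self.2 (fun y hy => by
      simp only [decide_eq_true_eq]
      intro he
      exact hxh (hxa ▸ he ▸ (by simp [vals]; exact ⟨y.2, by simpa using hy⟩)))]

lemma eqv_canon (p : PW M n) :
    Relation.EqvGen MagnStep p (firstK 1 p ++ firstKR 1 p) := by
  induction p with
  | nil =>
    have : firstK 1 ([] : PW M n) ++ firstKR 1 ([] : PW M n) = [] := by
      simp [firstK, firstKR, firstKAux]
    rw [this]
    exact Relation.EqvGen.refl _
  | cons a q ih =>
    have h1 : Relation.EqvGen MagnStep (a :: q) (a :: (firstK 1 q ++ firstKR 1 q)) :=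
      eqv_cons a ih
    by_cases h : a.1 ∈ vals q
    · obtain ⟨g, h', β, hq, hg, hh, hcons⟩ := firstK1_cons_mem h
      have hstep : Step1 (a :: (firstK 1 q ++ firstKR 1 q)) (a :: (g ++ (h' ++ firstKR 1 q))) := by
        refine ⟨a :: g, h' ++ firstKR 1 q, a.1, β, ?_, ?_, ⟨a, by simp, rfl⟩, ?_⟩
        · rw [hq]; simp
        · simp
        · rw [hasVal_iff]
          simp only [vals, List.map_append, List.mem_append]
          refine Or.inr ?_
          show a.1 ∈ vals (firstKR 1 q)
          rw [mem_vals_firstKR1]; exact h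
      have h2 : Relation.EqvGen MagnStep (a :: (firstK 1 q ++ firstKR 1 q))
          (a :: (g ++ (h' ++ firstKR 1 q))) := Relation.EqvGen.rel _ _ (Or.inl hstep)
      rw [hcons, firstKR1_cons_mem h]
      have e : (a :: (g ++ h')) ++ firstKR 1 q = a :: (g ++ (h' ++ firstKR 1 q)) := by simp
      rw [e]
      exact Relation.EqvGen.trans _ _ _ h1 h2
    · have hdup : Step3 (([] : PW M n) ++ (a.1, a.2) :: (a.1, a.2) :: (firstK 1 q ++ firstKR 1 q))
          (([] : PW M n) ++ (a.1, a.2) :: (firstK 1 q ++ firstKR 1 q)) :=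
        ⟨[], firstK 1 q ++ firstKR 1 q, a.1, a.2, rfl, rfl⟩
      have e0 : ([] : PW M n) ++ (a.1, a.2) :: (a.1, a.2) :: (firstK 1 q ++ firstKR 1 q)
          = [a] ++ a :: (firstK 1 q ++ firstKR 1 q) := by simp
      have e0' : ([] : PW M n) ++ (a.1, a.2) :: (firstK 1 q ++ firstKR 1 q)
          = a :: (firstK 1 q ++ firstKR 1 q) := by simp
      rw [e0, e0'] at hdup
      have h2 : Relation.EqvGen MagnStep (a :: (firstK 1 q ++ firstKR 1 q))
          ([a] ++ a :: (firstK 1 q ++ firstKR 1 q)) :=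
        Relation.EqvGen.symm _ _ (Relation.EqvGen.rel _ _ (Or.inr (Or.inr hdup)))
      have h3 : Relation.EqvGen MagnStep ([a] ++ a :: (firstK 1 q ++ firstKR 1 q))
          ([a] ++ (firstK 1 q ++ a :: firstKR 1 q)) := by
        refine bubble a (firstK 1 q) [a] (firstKR 1 q) (by simp [vals]) ?_ ?_ ?_
        · intro j hj
          rw [mem_vals_firstKR1]
          rw [mem_vals_firstK1] at hj
          exact hj
        · rw [mem_vals_firstK1]; exact h
        · rw [mem_vals_firstKR1]; exact h
      rw [firstK1_cons_not_mem h, firstKR1_cons_not_mem h]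
      have e : (a :: firstK 1 q) ++ a :: firstKR 1 q
          = [a] ++ (firstK 1 q ++ a :: firstKR 1 q) := by simp
      rw [e]
      exact Relation.EqvGen.trans _ _ _ h1 (Relation.EqvGen.trans _ _ _ h2 h3)

end Lemmas3

/-- Two `M`-pigmented words of the same arity are `∼`-equivalent if and only if they
have the same `first₁` and `first₁^R` images. -/
theorem eqvGen_iff_first_one (M : Type*) [Monoid M] (n : ℕ) (p p' : PW M n) :
    Relation.EqvGen MagnStep p p' ↔
      (firstK 1 p = firstK 1 p' ∧ firstKR 1 p = firstKR 1 p') := by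
  constructor
  · intro h
    induction h with
    | rel u v huv => exact ⟨step_firstK1 huv, step_firstKR1 huv⟩
    | refl u => exact ⟨rfl, rfl⟩
    | symm u v _ ih => exact ⟨ih.1.symm, ih.2.symm⟩
    | trans u v w _ _ ih1 ih2 => exact ⟨ih1.1.trans ih2.1, ih1.2.trans ih2.2⟩
  · rintro ⟨h1, h2⟩
    have c1 := eqv_canon p
    have c2 := eqv_canon p'
    rw [h1, h2] at c1
    exact Relation.EqvGen.trans _ _ _ c1 (Relation.EqvGen.symm _ _ c2)
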